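/- The type-aware order crossover TOX1 produces a valid chromosome: let P₁ and P₂ be lists of nonzero integers of length n such that the lists of their entrywise absolute values are each a permutation of (1,…,n), let 0 ≤ i₁ ≤ i₂ ≤ n, let Seg be the sublist of P₁ consisting of its entries at positions i₁ through i₂−1, and let Rest be the sublist of P₂ consisting of those entries whose absolute value does not occur among the absolute values of entries of Seg, taken in the order they appear in P₂. Then the concatenation Seg ++ Rest has length n, all its entries are nonzero, and the list of its entrywise absolute values is a permutation of (1,…,n); i.e., the offspring visits every customer exactly once. -/

import Mathlib

/-- Validity of the TOX1 crossover: copying the segment of the first parent between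
positions `i₁` and `i₂ - 1` and appending the customers missing from it in the order
(and with the signs) in which they appear in the second parent yields a chromosome of
length `n` with nonzero entries whose absolute values are a permutation of `1,…,n`:
the offspring visits every customer exactly once. -/
theorem tox1_valid (n : ℕ) (P₁ P₂ : List ℤ)
    (h₁len : P₁.length = n) (h₂len : P₂.length = n)
    (h₁ne : ∀ x ∈ P₁, x ≠ 0) (h₂ne : ∀ x ∈ P₂, x ≠ 0)
    (h₁ : List.Perm (P₁.map Int.natAbs) (List.range' 1 n))
    (h₂ : List.Perm (P₂.map Int.natAbs) (List.range' 1 n))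
    (i₁ i₂ : ℕ) (hi₁₂ : i₁ ≤ i₂) (hi₂ : i₂ ≤ n)
    (Seg Rest : List ℤ)
    (hSeg : Seg = (P₁.take i₂).drop i₁)
    (hRest : Rest = P₂.filter fun x => x.natAbs ∉ Seg.map Int.natAbs) :
    (Seg ++ Rest).length = n ∧ (∀ x ∈ Seg ++ Rest, x ≠ 0) ∧
      List.Perm ((Seg ++ Rest).map Int.natAbs) (List.range' 1 n) := by
  have hSegSub : List.Sublist Seg P₁ := by
    rw [hSeg]
    exact ((P₁.take i₂).drop_sublist i₁).trans (P₁.take_sublist i₂)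
  set S := Seg.map Int.natAbs with hS
  have hSsub : List.Sublist S (P₁.map Int.natAbs) := hSegSub.map _
  have ndR : (List.range' 1 n).Nodup := List.nodup_range'
  have nd1 : (P₁.map Int.natAbs).Nodup := h₁.nodup_iff.mpr ndR
  have ndS : S.Nodup := hSsub.nodup nd1
  have hmapRest : Rest.map Int.natAbs
      = (P₂.map Int.natAbs).filter (fun a => decide (a ∉ S)) := by
    have hgen : ∀ l : List ℤ, (l.filter (fun x => decide (x.natAbs ∉ S))).map Int.natAbs
        = (l.map Int.natAbs).filter (fun a => decide (a ∉ S)) := by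
      intro l
      induction l with
      | nil => rfl
      | cons x t ih =>
        simp only [decide_not] at ih ⊢
        by_cases h : x.natAbs ∈ S <;> simp [h, ih]
    rw [hRest, hgen]
  have hfperm : (P₂.map Int.natAbs).filter (fun a => decide (a ∉ S))
      |>.Perm ((List.range' 1 n).filter (fun a => decide (a ∉ S))) := h₂.filter _
  have ndF : ((List.range' 1 n).filter (fun a => decide (a ∈ S))).Nodup :=
    ndR.filter _
  have hSsubR : ∀ a ∈ S, a ∈ List.range' 1 n := fun a ha =>
    h₁.subset (hSsub.subset ha)
  have hSperm : S.Perm ((List.range' 1 n).filter (fun a => decide (a ∈ S))) := by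
    refine (List.perm_ext_iff_of_nodup ndS ndF).mpr ?_
    intro a
    simp only [List.mem_filter, decide_eq_true_eq]
    exact ⟨fun h => ⟨hSsubR a h, h⟩, fun h => h.2⟩
  have last : ((List.range' 1 n).filter (fun a => decide (a ∈ S))
      ++ (List.range' 1 n).filter (fun a => decide (a ∉ S))).Perm (List.range' 1 n) := by
    have := List.filter_append_perm (fun a => decide (a ∈ S)) (List.range' 1 n)
    simpa [decide_not] using this
  have key : ((Seg ++ Rest).map Int.natAbs).Perm (List.range' 1 n) := by
    rw [List.map_append, hmapRest]
    exact (hSperm.append hfperm).trans last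

  refine ⟨?_, ?_, key⟩
  · have := key.length_eq
    simpa using this
  · intro x hx
    rcases List.mem_append.mp hx with h | h
    · exact h₁ne x (hSegSub.subset h)
    · exact h₂ne x (List.mem_of_mem_filter (hRest ▸ h))
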